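/- Fix integers q ≥ 1 and p. Suppose given families of abelian groups S n and Y n indexed by n ∈ ℤ, in which every element of every Y n is 2-torsion, together with additive maps d_Y : Y n →+ Y (n+1), and for all integers i, a, b a biadditive higher cup product ∪ᵢ : Y a → Y b → S (a+b−i) which is the zero map whenever i < 0 and all of whose values are 2-torsion. Define on C̄^p := S p × Y (p−q) the operation (s₁,y₁) ⊞ (s₂,y₂) := (s₁ + s₂ + (d_Y y₁) ∪_{p−2q+1} y₂ + y₁ ∪_{p−2q} y₂, y₁ + y₂). Then ⊞ is associative, (0,0) is a two-sided identity, and every element (s,y) has two-sided inverse (−s + (d_Y y) ∪_{p−2q+1} y + y ∪_{p−2q} y, y); hence (C̄^p, ⊞) is a (generally non-abelian) group. -/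

import Mathlib

/-- The E-cochain sum `⊞` on `C̄^p = S p × Y (p - q)`:
`(s₁,y₁) ⊞ (s₂,y₂) = (s₁ + s₂ + (d_Y y₁) ∪_{p-2q+1} y₂ + y₁ ∪_{p-2q} y₂, y₁ + y₂)`. -/
def eBoxplus (q : ℤ) {S Y : ℤ → Type*} [∀ n, AddCommGroup (S n)] [∀ n, AddCommGroup (Y n)]
    (dY : ∀ a b : ℤ, a + 1 = b → Y a →+ Y b)
    (cup : ∀ i a b c : ℤ, a + b - i = c → Y a → Y b → S c)
    (p : ℤ) (x₁ x₂ : S p × Y (p - q)) : S p × Y (p - q) :=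
  (x₁.1 + x₂.1
      + cup (p - 2 * q + 1) (p - q + 1) (p - q) p (by ring) (dY (p - q) (p - q + 1) rfl x₁.2) x₂.2
      + cup (p - 2 * q) (p - q) (p - q) p (by ring) x₁.2 x₂.2,
    x₁.2 + x₂.2)

/-- The operation `⊞` on `C̄^p = S p × Y (p - q)` is associative, has `(0,0)` as a two-sided
identity, and every `(s, y)` has the two-sided inverse
`(-s + (d_Y y) ∪_{p-2q+1} y + y ∪_{p-2q} y, y)`; hence `(C̄^p, ⊞)` is a group. -/
theorem stmt16 (q p : ℤ) (hq : 1 ≤ q)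
    {S Y : ℤ → Type*} [∀ n, AddCommGroup (S n)] [∀ n, AddCommGroup (Y n)]
    (hY2 : ∀ (n : ℤ) (y : Y n), y + y = 0)
    (dY : ∀ a b : ℤ, a + 1 = b → Y a →+ Y b)
    (cup : ∀ i a b c : ℤ, a + b - i = c → Y a → Y b → S c)
    (hcupl : ∀ (i a b c : ℤ) (h : a + b - i = c) (u u' : Y a) (v : Y b),
      cup i a b c h (u + u') v = cup i a b c h u v + cup i a b c h u' v)
    (hcupr : ∀ (i a b c : ℤ) (h : a + b - i = c) (u : Y a) (v v' : Y b),
      cup i a b c h u (v + v') = cup i a b c h u v + cup i a b c h u v')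
    (hcupneg : ∀ (i a b c : ℤ) (h : a + b - i = c) (u : Y a) (v : Y b),
      i < 0 → cup i a b c h u v = 0)
    (hcup2 : ∀ (i a b c : ℤ) (h : a + b - i = c) (u : Y a) (v : Y b),
      cup i a b c h u v + cup i a b c h u v = 0) :
    (∀ x y z : S p × Y (p - q),
      eBoxplus q dY cup p (eBoxplus q dY cup p x y) z
        = eBoxplus q dY cup p x (eBoxplus q dY cup p y z)) ∧
    (∀ x : S p × Y (p - q),
      eBoxplus q dY cup p (0, 0) x = x ∧ eBoxplus q dY cup p x (0, 0) = x) ∧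
    (∀ x : S p × Y (p - q),
      eBoxplus q dY cup p x
        (-x.1 + cup (p - 2 * q + 1) (p - q + 1) (p - q) p (by ring)
            (dY (p - q) (p - q + 1) rfl x.2) x.2
          + cup (p - 2 * q) (p - q) (p - q) p (by ring) x.2 x.2, x.2) = (0, 0) ∧
      eBoxplus q dY cup p
        (-x.1 + cup (p - 2 * q + 1) (p - q + 1) (p - q) p (by ring)
            (dY (p - q) (p - q + 1) rfl x.2) x.2
          + cup (p - 2 * q) (p - q) (p - q) p (by ring) x.2 x.2, x.2) x = (0, 0)) := by
  have h0l : ∀ (i a b c : ℤ) (h : a + b - i = c) (v : Y b), cup i a b c h 0 v = 0 := by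
    intro i a b c h v
    have := hcupl i a b c h 0 0 v
    rw [add_zero] at this
    exact left_eq_add.mp this
  have h0r : ∀ (i a b c : ℤ) (h : a + b - i = c) (u : Y a), cup i a b c h u 0 = 0 := by
    intro i a b c h u
    have := hcupr i a b c h u 0 0
    rw [add_zero] at this
    exact left_eq_add.mp this
  have h2 : ∀ (i a b c : ℤ) (h : a + b - i = c) (u : Y a) (v : Y b),
      (2 : ℕ) • cup i a b c h u v = 0 := by
    intro i a b c h u v
    rw [two_smul]; exact hcup2 i a b c h u v
  have h2z : ∀ (i a b c : ℤ) (h : a + b - i = c) (u : Y a) (v : Y b),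
      (2 : ℤ) • cup i a b c h u v = 0 := by
    intro i a b c h u v
    rw [two_smul]; exact hcup2 i a b c h u v
  refine ⟨?_, ?_, ?_⟩
  · rintro ⟨s₁, y₁⟩ ⟨s₂, y₂⟩ ⟨s₃, y₃⟩
    simp only [eBoxplus, Prod.mk.injEq, hcupl, hcupr, map_add]
    constructor
    · abel
    · abel
  · rintro ⟨s, y⟩
    simp only [eBoxplus, Prod.mk.injEq, h0l, h0r, map_zero, add_zero, zero_add, and_self]
  · rintro ⟨s, y⟩
    simp only [eBoxplus, Prod.mk.injEq]
    refine ⟨⟨?_, hY2 _ y⟩, ?_, hY2 _ y⟩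
    · abel_nf
      simp [h2, h2z]
    · abel_nf
      simp [h2, h2z]
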